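/- Let G act trace-preservingly on (M,τ), A globally invariant finitely generated unital *-subalgebra with A = C⟨X⟩ for a finite self-adjoint X, and set Y = X ∪ {u_g : g∈G}. For d ∈ Der(A,τ) and distinct h, h' ∈ G, the extended derivations d^h and d^{h'} on A⋊_α G (as defined via d^h(Σ a_k u_k) = J(u_e⊗(u_h*)°)J Σ_{k,g} u_g*·d(α_g(a_k))·u_g u_k) are orthogonal with respect to the inner product ⟨d₁,d₂⟩_Y = Σ_{y∈Y} ⟨d₁(y), d₂(y)⟩. -/

import Mathlib

noncomputable section

open scoped BigOperators

local notation "⟪" x ", " y "⟫" => @inner ℂ _ _ x y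

/-- A complete space instance for `PiLp` (finite or infinite products of complete spaces). -/
instance piLpCompleteSpace {ι : Type*} {β : ι → Type*} (p : ENNReal) [∀ i, UniformSpace (β i)]
    [∀ i, CompleteSpace (β i)] : CompleteSpace (PiLp p β) :=
  (PiLp.uniformEquiv p β).completeSpace_iff.2 (inferInstance : CompleteSpace (∀ i, β i))

/-- The "von Neumann dimension" of (the closure of) a subspace `K` of a Hilbert module,
computed as the trace of the orthogonal projection onto its closure, the trace being the
sum of the vector states at the given finite family `v` of canonical trace vectors. -/
noncomputable def vnDim {F : Type*} [NormedAddCommGroup F] [InnerProductSpace ℂ F]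
    [CompleteSpace F] {κ : Type*} (s : Finset κ) (v : κ → F) (K : Submodule ℂ F) : ℝ :=
  haveI : CompleteSpace K.topologicalClosure :=
    K.isClosed_topologicalClosure.completeSpace_coe
  ∑ k ∈ s, (⟪((K.topologicalClosure.orthogonalProjectionOnto (v k) : F)), v k⟫).re

/-- An element of an `ι`-indexed `L²`-direct sum supported at `i` with value `x`. -/
noncomputable def sngl {ι : Type*} {E : Type*} [NormedAddCommGroup E] (i : ι) (x : E) :
    PiLp 2 (fun _ : ι => E) :=
  letI := Classical.decEq ι
  (WithLp.equiv 2 _).symm (Pi.single i x)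

/-- The setting of the paper: a trace preserving action `α` of a finite group `G` on a tracial
von Neumann algebra, a globally invariant finitely generated unital `*`-subalgebra `A`, the
algebraic crossed product `B = A ⋊_α G` (with implementing unitaries `u g` and coefficients
`coef`), the coarse bimodules `H0 = L²(A ⊗ A°)` and `H = L²(B ⊗ B°)` with their commuting
left/right multiplication actions `lm0, rm0, l20` resp. `lm, rm, l2` (first-leg left, second-leg
right, second-leg left), the Tomita conjugations `J0`, `J`, the trace vectors `xi0 = 1 ⊗ 1°`,
the summand projections `p g h` onto `L²(A ⊗ A°)(u_g ⊗ u_h°)`, the isometric identification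
`ι` of `H0` with the `(e,e)`-summand, the GNS spaces `L2A = L²(A,τ)`, `L2B = L²(B,τ)` and the
finite-rank subspaces `FR0 ⊆ H0`, `FRB ⊆ H` corresponding to `L² ⊙ L²`. -/
structure CP (G : Type*) [Group G] [Fintype G] where
  /-- the `*`-algebra `A` -/
  A : Type*
  [ringA : Ring A]
  [algA : Algebra ℂ A]
  [starA : StarRing A]
  [starMA : StarModule ℂ A]
  /-- the action of `G` on `A` by trace preserving `*`-automorphisms -/
  α : G →* (A ≃ₐ[ℂ] A)
  α_star : ∀ g (a : A), α g (star a) = star (α g a)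
  /-- the crossed product `B = A ⋊_α G` -/
  B : Type*
  [ringB : Ring B]
  [algB : Algebra ℂ B]
  [starB : StarRing B]
  [starMB : StarModule ℂ B]
  /-- the inclusion `A ⊆ B` -/
  j : A →⋆ₐ[ℂ] B
  jinj : Function.Injective j
  /-- the implementing unitaries -/
  u : G → B
  u_mul : ∀ g h, u g * u h = u (g * h)
  u_one : u 1 = 1
  u_star : ∀ g, star (u g) = u g⁻¹
  cov : ∀ g a, u g * j a = j (α g a) * u g
  /-- coefficients of the unique decomposition `b = ∑ g, j (coef b g) * u g` -/
  coef : B → G → A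
  coef_spec : ∀ b : B, b = ∑ g : G, j (coef b g) * u g
  coef_unique : ∀ (b : B) (c : G → A), b = ∑ g : G, j (c g) * u g → c = coef b
  /-- the coarse bimodule `H0 = L²(A ⊗ A°, τ ⊗ τ°)` -/
  H0 : Type*
  [nH0 : NormedAddCommGroup H0]
  [ipH0 : InnerProductSpace ℂ H0]
  [cH0 : CompleteSpace H0]
  /-- first-leg left multiplication `a · ξ` on `H0` -/
  lm0 : A → H0 →ₗ[ℂ] H0
  lm0_one : lm0 1 = LinearMap.id
  lm0_mul : ∀ a b, lm0 (a * b) = (lm0 a).comp (lm0 b)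
  lm0_add : ∀ a b, lm0 (a + b) = lm0 a + lm0 b
  lm0_smul : ∀ (c : ℂ) a, lm0 (c • a) = c • lm0 a
  /-- second-leg right multiplication `ξ · a` on `H0` -/
  rm0 : A → H0 →ₗ[ℂ] H0
  rm0_one : rm0 1 = LinearMap.id
  rm0_mul : ∀ a b, rm0 (a * b) = (rm0 b).comp (rm0 a)
  rm0_add : ∀ a b, rm0 (a + b) = rm0 a + rm0 b
  rm0_smul : ∀ (c : ℂ) a, rm0 (c • a) = c • rm0 a
  lm0_rm0_comm : ∀ a b, (lm0 a).comp (rm0 b) = (rm0 b).comp (lm0 a)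
  /-- second-leg left multiplication (commutant direction) on `H0` -/
  l20 : A → H0 →ₗ[ℂ] H0
  l20_one : l20 1 = LinearMap.id
  l20_mul : ∀ a b, l20 (a * b) = (l20 a).comp (l20 b)
  l20_lm0_comm : ∀ a b, (l20 a).comp (lm0 b) = (lm0 b).comp (l20 a)
  l20_rm0_comm : ∀ a b, (l20 a).comp (rm0 b) = (rm0 b).comp (l20 a)
  /-- the trace vector `1 ⊗ 1° ∈ L²(A ⊗ A°)` -/
  xi0 : H0
  xi0_norm : ‖xi0‖ = 1
  /-- the Tomita conjugation on `H0` -/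
  J0 : H0 →ₛₗ[starRingEnd ℂ] H0
  J0_inv : ∀ ξ, J0 (J0 ξ) = ξ
  J0_inner : ∀ ξ η, ⟪J0 ξ, J0 η⟫ = ⟪η, ξ⟫
  J0_xi0 : J0 xi0 = xi0
  /-- the coarse bimodule `H = L²(B ⊗ B°, τ ⊗ τ°)` of the crossed product -/
  H : Type*
  [nH : NormedAddCommGroup H]
  [ipH : InnerProductSpace ℂ H]
  [cH : CompleteSpace H]
  lm : B → H →ₗ[ℂ] H
  lm_one : lm 1 = LinearMap.id
  lm_mul : ∀ x y, lm (x * y) = (lm x).comp (lm y)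
  lm_add : ∀ x y, lm (x + y) = lm x + lm y
  lm_smul : ∀ (c : ℂ) x, lm (c • x) = c • lm x
  rm : B → H →ₗ[ℂ] H
  rm_one : rm 1 = LinearMap.id
  rm_mul : ∀ x y, rm (x * y) = (rm y).comp (rm x)
  rm_add : ∀ x y, rm (x + y) = rm x + rm y
  rm_smul : ∀ (c : ℂ) x, rm (c • x) = c • rm x
  lm_rm_comm : ∀ x y, (lm x).comp (rm y) = (rm y).comp (lm x)
  l2 : B → H →ₗ[ℂ] H
  l2_one : l2 1 = LinearMap.id
  l2_mul : ∀ x y, l2 (x * y) = (l2 x).comp (l2 y)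
  l2_lm_comm : ∀ x y, (l2 x).comp (lm y) = (lm y).comp (l2 x)
  l2_rm_comm : ∀ x y, (l2 x).comp (rm y) = (rm y).comp (l2 x)
  /-- the Tomita conjugation on `H` -/
  J : H →ₛₗ[starRingEnd ℂ] H
  J_inv : ∀ ξ, J (J ξ) = ξ
  J_inner : ∀ ξ η, ⟪J ξ, J η⟫ = ⟪η, ξ⟫
  /-- the projections onto the summands `L²(A ⊗ A°)(u_g ⊗ u_h°)` -/
  p : G → G → H →ₗ[ℂ] H
  p_idem : ∀ g h, (p g h).comp (p g h) = p g h
  p_orth : ∀ g h g' h', (g, h) ≠ (g', h') → (p g h).comp (p g' h') = 0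
  p_sum : ∑ g : G, ∑ h : G, p g h = LinearMap.id
  p_sa : ∀ g h ξ η, ⟪p g h ξ, η⟫ = ⟪ξ, p g h η⟫
  p_lm_u : ∀ k g h, (p g h).comp (lm (u k)) = (lm (u k)).comp (p (k⁻¹ * g) h)
  p_rm_u : ∀ k g h, (p g h).comp (rm (u k)) = (rm (u k)).comp (p g (h * k⁻¹))
  p_l2_u : ∀ k g h, (p g h).comp (l2 (u k)) = (l2 (u k)).comp (p g (k⁻¹ * h))
  p_lm_j : ∀ (a : A) g h, (p g h).comp (lm (j a)) = (lm (j a)).comp (p g h)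
  p_rm_j : ∀ (a : A) g h, (p g h).comp (rm (j a)) = (rm (j a)).comp (p g h)
  p_l2_j : ∀ (a : A) g h, (p g h).comp (l2 (j a)) = (l2 (j a)).comp (p g h)
  p_J : ∀ g h ξ, p g h (J ξ) = J (p g⁻¹ h⁻¹ ξ)
  /-- the identification of `H0` with the `(e,e)`-summand of `H` -/
  ι : H0 →ₗᵢ[ℂ] H
  ιinv : H →ₗ[ℂ] H0
  ιinv_ι : ∀ ξ, ιinv (ι ξ) = ξ
  ι_ιinv : ∀ η, ι (ιinv (p 1 1 η)) = p 1 1 η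
  p_ι : ∀ ξ, p 1 1 (ι ξ) = ι ξ
  ι_lm : ∀ a ξ, lm (j a) (ι ξ) = ι (lm0 a ξ)
  ι_rm : ∀ a ξ, rm (j a) (ι ξ) = ι (rm0 a ξ)
  ι_l2 : ∀ a ξ, l2 (j a) (ι ξ) = ι (l20 a ξ)
  ι_J : ∀ ξ, J (ι ξ) = ι (J0 ξ)
  /-- the GNS space `L²(A, τ)` with the canonical embedding of `A` -/
  L2A : Type*
  [nL2A : NormedAddCommGroup L2A]
  [ipL2A : InnerProductSpace ℂ L2A]
  [cL2A : CompleteSpace L2A]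
  hatA : A →ₗ[ℂ] L2A
  hatA_dense : (Submodule.span ℂ (Set.range hatA)).topologicalClosure = ⊤
  /-- the GNS space `L²(B, τ)` with the canonical embedding of `B` -/
  L2B : Type*
  [nL2B : NormedAddCommGroup L2B]
  [ipL2B : InnerProductSpace ℂ L2B]
  [cL2B : CompleteSpace L2B]
  hatB : B →ₗ[ℂ] L2B
  hatB_dense : (Submodule.span ℂ (Set.range hatB)).topologicalClosure = ⊤
  /-- the finite-rank subspace `L²(A) ⊙ L²(A°) ⊆ H0` -/
  FR0 : Submodule ℂ H0
  FR0_dense : FR0.topologicalClosure = ⊤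
  FR0_mem : ∀ a b, lm0 a (rm0 b xi0) ∈ FR0
  /-- the finite-rank subspace `L²(B) ⊙ L²(B°) ⊆ H` -/
  FRB : Submodule ℂ H
  FRB_dense : FRB.topologicalClosure = ⊤
  FRB_mem : ∀ x y, lm x (rm y (ι xi0)) ∈ FRB

attribute [instance] CP.ringA CP.algA CP.starA CP.starMA CP.ringB CP.algB CP.starB CP.starMB
attribute [instance] CP.nH0 CP.ipH0 CP.cH0 CP.nH CP.ipH CP.cH
attribute [instance] CP.nL2A CP.ipL2A CP.cL2A CP.nL2B CP.ipL2B CP.cL2B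

namespace CP

variable {G : Type*} [Group G] [Fintype G] (S : CP G)

/-- `d : A → L²(A ⊗ A°)` is a derivation. -/
def IsDerA (d : S.A → S.H0) : Prop :=
  (∀ x y, d (x + y) = d x + d y) ∧ (∀ (c : ℂ) (x : S.A), d (c • x) = c • d x) ∧
    (∀ x y, d (x * y) = S.lm0 x (d y) + S.rm0 y (d x))

/-- `D : B → L²(B ⊗ B°)` is a derivation. -/
def IsDerB (D : S.B → S.H) : Prop :=
  (∀ x y, D (x + y) = D x + D y) ∧ (∀ (c : ℂ) (x : S.B), D (c • x) = c • D x) ∧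
    (∀ x y, D (x * y) = S.lm x (D y) + S.rm y (D x))

/-- `D` vanishes on `ℂ[G] = span {u_g}`. -/
def VanishCG (D : S.B → S.H) : Prop :=
  ∀ x ∈ Submodule.span ℂ (Set.range S.u), D x = 0

/-- The operator `J (x ⊗ y°) J` on `L²(B ⊗ B°)`, an element of the commutant. -/
def Jmul (x y : S.B) (ξ : S.H) : S.H := S.J (S.lm x (S.l2 y (S.J ξ)))

/-- The right action of `(x ⊗ y°)* = J(x ⊗ y°)J` on derivations' values:
`(D · (x ⊗ y°))(b) = J (x ⊗ y°)* J (D b)`. -/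
def ract (x y : S.B) (ξ : S.H) : S.H := S.Jmul (star x) (star y) ξ

/-- The right action of `(x ⊗ y°)*` on `L²(A ⊗ A°)`. -/
def ract0 (x y : S.A) (ξ : S.H0) : S.H0 := S.J0 (S.lm0 (star x) (S.l20 (star y) (S.J0 ξ)))

/-- The extension `d^h` of a derivation `d ∈ Der(A, τ)` to a derivation of `A ⋊_α G`
vanishing on `ℂ[G]`:
`d^h(∑ a_k u_k) = J(u_e ⊗ (u_h*)°)J ∑_{k,g} u_g* · d(α_g(a_k)) · (u_g u_k)`. -/
def ext (d : S.A → S.H0) (h : G) (b : S.B) : S.H :=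
  S.Jmul 1 (star (S.u h)) (∑ k : G, ∑ g : G,
    S.lm (star (S.u g)) (S.rm (S.u g * S.u k) (S.ι (d (S.α g (S.coef b k))))))

/-- The compression `D_{g,h} = J(u_g ⊗ u_h°)J ∘ p_{g,h} ∘ D|_A` of a derivation of
`A ⋊_α G`, viewed as valued in `L²(A ⊗ A°)`. -/
def cmp (D : S.B → S.H) (g h : G) (a : S.A) : S.H0 :=
  S.ιinv (S.Jmul (S.u g) (S.u h) (S.p g h (D (S.j a))))

/-- The inner product `⟨D₁, D₂⟩_Y = ∑_{y ∈ Y} ⟨D₁(y), D₂(y)⟩` on derivations coming from a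
generating set `Y`. -/
def dip (Y : Finset S.B) (D₁ D₂ : S.B → S.H) : ℂ := ∑ y ∈ Y, ⟪D₁ y, D₂ y⟫

/-- The inner product on derivations of `A` coming from a generating set `X`. -/
def dipA (X : Finset S.A) (d₁ d₂ : S.A → S.H0) : ℂ := ∑ x ∈ X, ⟪d₁ x, d₂ x⟫

/-- The image `φ_X(d) = (d(x))_{x ∈ X}` of a derivation of `A`. -/
def phiA (X : Finset S.A) (d : S.A → S.H0) : PiLp 2 (fun _ : {x // x ∈ X} => S.H0) :=
  WithLp.toLp 2 (fun x => d x.1)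

/-- The image `φ_Y(D) = (D(y))_{y ∈ Y}` of a derivation of `B`. -/
def phiB (Y : Finset S.B) (D : S.B → S.H) : PiLp 2 (fun _ : {y // y ∈ Y} => S.H) :=
  WithLp.toLp 2 (fun y => D y.1)

/-- The von Neumann dimension over `(A ⊗ A°)''` of a set of derivations of `A`,
with respect to the generating set `X`. -/
noncomputable def vdimA (X : Finset S.A) (𝒟 : Set (S.A → S.H0)) : ℝ :=
  vnDim Finset.univ (fun x : {x // x ∈ X} => sngl x S.xi0)
    (Submodule.span ℂ (S.phiA X '' 𝒟))

/-- The von Neumann dimension over `(B ⊗ B°)''` of a set of derivations of `B = A ⋊_α G`,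
with respect to the generating set `Y`; the trace vector of `L²(B ⊗ B°)` is `ι xi0 = 1 ⊗ 1°`. -/
noncomputable def vdimB (Y : Finset S.B) (𝒟 : Set (S.B → S.H)) : ℝ :=
  vnDim Finset.univ (fun y : {y // y ∈ Y} => sngl y (S.ι S.xi0))
    (Submodule.span ℂ (S.phiB Y '' 𝒟))

/-- The von Neumann dimension over the smaller algebra `(A ⊗ A°)''` of a set of derivations of
`B = A ⋊_α G`: `L²(B ⊗ B°)` is the direct sum of `|G|²` copies of `L²(A ⊗ A°)` with trace
vectors `u_g ⊗ u_h° = (u_g) · (1 ⊗ 1°) · (u_h)`. -/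
noncomputable def vdimBoverA (Y : Finset S.B) (𝒟 : Set (S.B → S.H)) : ℝ :=
  vnDim Finset.univ
    (fun z : {y // y ∈ Y} × G × G =>
      sngl z.1 (S.lm (S.u z.2.1) (S.rm (S.u z.2.2) (S.ι S.xi0))))
    (Submodule.span ℂ (S.phiB Y '' 𝒟))

/-- `X` is a finite self-adjoint generating set of `A`. -/
def GenA (X : Finset S.A) : Prop :=
  (∀ x ∈ X, star x ∈ X) ∧ Algebra.adjoin ℂ (X : Set S.A) = ⊤

/-- `Y` is a finite self-adjoint generating set of `B`. -/
def GenB (Y : Finset S.B) : Prop :=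
  (∀ y ∈ Y, star y ∈ Y) ∧ Algebra.adjoin ℂ (Y : Set S.B) = ⊤

/-- `1 ⊗ 1°` belongs to the domain of `d*`, where `d` is viewed as a densely defined operator
`L²(A, τ) → L²(A ⊗ A°, τ ⊗ τ°)`. -/
def Dom11A (d : S.A → S.H0) : Prop :=
  ∃ η : S.L2A, ∀ a : S.A, ⟪S.xi0, d a⟫ = ⟪η, S.hatA a⟫

/-- `1 ⊗ 1°` belongs to the domain of `D*` for a derivation of `B`. -/
def Dom11B (D : S.B → S.H) : Prop :=
  ∃ η : S.L2B, ∀ b : S.B, ⟪S.ι S.xi0, D b⟫ = ⟪η, S.hatB b⟫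

end CP

namespace CP

variable {G : Type*} [Group G] [Fintype G] (S : CP G)

open scoped Classical

lemma p_apply_p (a b c e : G) (ξ : S.H) :
    S.p a b (S.p c e ξ) = if (a, b) = (c, e) then S.p c e ξ else 0 := by
  split_ifs with hcond
  · rw [Prod.mk.injEq] at hcond
    obtain ⟨rfl, rfl⟩ := hcond
    have := congrArg (fun f => f ξ) (S.p_idem a b)
    simpa using this
  · have := congrArg (fun f => f ξ) (S.p_orth a b c e hcond)
    simpa using this

lemma p_term (a b g k : G) (ξ0 : S.H0) :
    S.p a b (S.lm (star (S.u g)) (S.rm (S.u g * S.u k) (S.ι ξ0))) =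
      if (a, b) = (g⁻¹, g * k) then
        S.lm (star (S.u g)) (S.rm (S.u g * S.u k) (S.ι ξ0)) else 0 := by
  rw [S.u_star, S.u_mul]
  have h1 : S.p a b (S.lm (S.u g⁻¹) (S.rm (S.u (g * k)) (S.ι ξ0)))
      = S.lm (S.u g⁻¹) (S.p (g * a) b (S.rm (S.u (g * k)) (S.ι ξ0))) := by
    have := congrArg (fun f => f (S.rm (S.u (g * k)) (S.ι ξ0))) (S.p_lm_u g⁻¹ a b)
    simpa using this
  have h2 : S.p (g * a) b (S.rm (S.u (g * k)) (S.ι ξ0))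
      = S.rm (S.u (g * k)) (S.p (g * a) (b * (g * k)⁻¹) (S.ι ξ0)) := by
    have := congrArg (fun f => f (S.ι ξ0)) (S.p_rm_u (g * k) (g * a) b)
    simpa using this
  have h3 : S.p (g * a) (b * (g * k)⁻¹) (S.ι ξ0)
      = if ((g * a : G), b * (g * k)⁻¹) = ((1 : G), (1 : G)) then S.ι ξ0 else 0 := by
    conv_lhs => rw [← S.p_ι ξ0]
    rw [S.p_apply_p, S.p_ι]
  rw [h1, h2, h3]
  by_cases hc : (a, b) = (g⁻¹, g * k)
  · rw [Prod.mk.injEq] at hc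
    obtain ⟨rfl, rfl⟩ := hc
    have he : g * k * (k⁻¹ * g⁻¹) = 1 := by group
    simp [he]
  · have hne : ((g * a : G), b * (g * k)⁻¹) ≠ ((1 : G), (1 : G)) := by
      intro hcon
      rw [Prod.mk.injEq] at hcon
      apply hc
      rw [Prod.mk.injEq]
      exact ⟨eq_inv_of_mul_eq_one_right hcon.1, mul_inv_eq_one.mp hcon.2⟩
    rw [if_neg hne, if_neg hc, map_zero, map_zero]

lemma p_Jmul (a b h : G) (ξ : S.H) :
    S.p a b (S.Jmul 1 (star (S.u h)) ξ) =
      S.J (S.l2 (S.u h⁻¹) (S.J (S.p a (b * h⁻¹) ξ))) := by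
  unfold Jmul
  rw [S.u_star, S.lm_one]
  simp only [LinearMap.id_coe, id_eq]
  rw [S.p_J]
  congr 1
  have h1 : S.p a⁻¹ b⁻¹ (S.l2 (S.u h⁻¹) (S.J ξ))
      = S.l2 (S.u h⁻¹) (S.p a⁻¹ (h * b⁻¹) (S.J ξ)) := by
    have := congrArg (fun f => f (S.J ξ)) (S.p_l2_u h⁻¹ a⁻¹ b⁻¹)
    simpa using this
  rw [h1, S.p_J]
  simp [mul_inv_rev]

lemma coef_j_ne (x : S.A) {k : G} (hk : k ≠ 1) : S.coef (S.j x) k = 0 := by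
  classical
  have hc : S.j x = ∑ g : G, S.j (if g = 1 then x else 0) * S.u g := by
    rw [Finset.sum_eq_single 1]
    · simp [S.u_one]
    · intro g _ hg; simp [hg]
    · simp
  have h2 := S.coef_unique (S.j x) _ hc
  have h3 := congrFun h2 k
  simp only [if_neg hk] at h3
  exact h3.symm

lemma coef_u_or (m k : G) : S.coef (S.u m) k = 1 ∨ S.coef (S.u m) k = 0 := by
  classical
  have hc : S.u m = ∑ g : G, S.j (if g = m then (1 : S.A) else 0) * S.u g := by
    rw [Finset.sum_eq_single m]
    · simp
    · intro g _ hg; simp [hg]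
    · simp
  have h2 := S.coef_unique (S.u m) _ hc
  have h3 := congrFun h2 k
  by_cases hk : k = m
  · left; rw [← h3]; simp [hk]
  · right; rw [← h3]; simp [hk]

lemma derA_zero {d : S.A → S.H0} (hd : S.IsDerA d) : d 0 = 0 := by
  have := hd.2.1 0 0
  simpa using this

lemma derA_one {d : S.A → S.H0} (hd : S.IsDerA d) : d 1 = 0 := by
  have h1 : d 1 = d 1 + d 1 := by
    simpa [S.lm0_one, S.rm0_one] using hd.2.2 1 1
  exact (left_eq_add.mp h1)

lemma ext_u {d : S.A → S.H0} (hd : S.IsDerA d) (h m : G) : S.ext d h (S.u m) = 0 := by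
  have hc : ∀ k g : G, d (S.α g (S.coef (S.u m) k)) = 0 := by
    intro k g
    rcases S.coef_u_or m k with hk | hk <;>
      simp [hk, derA_one S hd, derA_zero S hd]
  simp [ext, Jmul, hc]

lemma p_ext_j {d : S.A → S.H0} (hd : S.IsDerA d) (x : S.A) (h a b : G)
    (hb : b ≠ a⁻¹ * h) : S.p a b (S.ext d h (S.j x)) = 0 := by
  unfold ext
  rw [S.p_Jmul]
  have hΞ : S.p a (b * h⁻¹) (∑ k : G, ∑ g : G,
      S.lm (star (S.u g)) (S.rm (S.u g * S.u k)
        (S.ι (d (S.α g (S.coef (S.j x) k)))))) = 0 := by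
    rw [map_sum]
    refine Finset.sum_eq_zero fun k _ => ?_
    rw [map_sum]
    refine Finset.sum_eq_zero fun g _ => ?_
    by_cases hk : k = (1 : G)
    · subst hk
      rw [S.p_term]
      rw [if_neg]
      intro hcon
      rw [Prod.mk.injEq] at hcon
      obtain ⟨ha, hbb⟩ := hcon
      apply hb
      rw [mul_inv_eq_iff_eq_mul] at hbb
      rw [ha, inv_inv]
      simpa using hbb
    · have hz : S.coef (S.j x) k = 0 := S.coef_j_ne x hk
      simp [hz, derA_zero S hd]
  rw [hΞ]
  simp

end CP

/- STATEMENT 7: Let `G` act trace-preservingly on `(M, τ)`, `A = ℂ⟨X⟩` globally invariant with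
`X` a finite self-adjoint generating set, and set `Y = X ∪ {u_g : g ∈ G}` (a generating set of
`A ⋊_α G`).  For `d ∈ Der(A, τ)` and distinct `h, h' ∈ G`, the extended derivations `d^h` and
`d^{h'}` on `A ⋊_α G` are orthogonal with respect to the inner product
`⟨d₁, d₂⟩_Y = ∑_{y ∈ Y} ⟨d₁(y), d₂(y)⟩`. -/
theorem stmt_7 {G : Type*} [Group G] [Fintype G] (S : CP G) [DecidableEq S.B]
    (X : Finset S.A) (hX : S.GenA X)
    (Y : Finset S.B) (hY : Y = X.image S.j ∪ Finset.univ.image S.u)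
    (d : S.A → S.H0) (hd : S.IsDerA d) (h h' : G) (hne : h ≠ h') :
    S.dip Y (S.ext d h) (S.ext d h') = 0 := by
  unfold CP.dip
  refine Finset.sum_eq_zero fun y hy => ?_
  rw [hY, Finset.mem_union] at hy
  rcases hy with hy | hy
  · obtain ⟨x, _, rfl⟩ := Finset.mem_image.mp hy
    have hsum : S.ext d h' (S.j x)
        = ∑ a : G, ∑ b : G, S.p a b (S.ext d h' (S.j x)) := by
      have := congrArg (fun f => f (S.ext d h' (S.j x))) S.p_sum
      simpa using this.symm
    rw [hsum, inner_sum]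
    refine Finset.sum_eq_zero fun a _ => ?_
    rw [inner_sum]
    refine Finset.sum_eq_zero fun b _ => ?_
    by_cases hb : b = a⁻¹ * h'
    · have h1 : S.p a b (S.ext d h' (S.j x))
          = S.p a b (S.p a b (S.ext d h' (S.j x))) := by
        have := congrArg (fun f => f (S.ext d h' (S.j x))) (S.p_idem a b)
        simpa using this.symm
      rw [h1, ← S.p_sa]
      have hb' : b ≠ a⁻¹ * h := by
        rw [hb]
        intro hcon
        exact hne (mul_left_cancel hcon).symm
      rw [S.p_ext_j hd x h a b hb']
      exact inner_zero_left _
    · rw [S.p_ext_j hd x h' a b hb]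
      exact inner_zero_right _
  · obtain ⟨m, _, rfl⟩ := Finset.mem_image.mp hy
    rw [S.ext_u hd h m]
    exact inner_zero_left _
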